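/- arXiv:2506.23243 — 3 statements merged into one kernel-verified Lean document; each statement's English description precedes it below -/
import Mathlib

section
/- Let Λ and Γ be rings that are separably equivalent via bimodules _ΛM_Γ and _ΓN_Λ. Then _ΛM is a projective generator of Mod Λ (i.e. M is projective and Λ is a direct summand of a finite direct sum of copies of M), and dually _ΓN is a projective generator of Mod Γ, M_Γ is a projective generator of Mod Γ^op, and N_Λ is a projective generator of Mod Λ^op. -/
open TensorProduct CategoryTheory MulOpposite

noncomputable section

/-! ## The balanced tensor product over a (possibly noncommutative) ring -/

/-- The submodule of relations defining the balanced tensor product `A ⊗[R] B`,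
where `A` is an `(S,R)`-bimodule and `B` is a left `R`-module. -/
def BTrel (S R : Type) [Ring S] [Ring R]
    (A : Type) [AddCommGroup A] [Module S A] [Module Rᵐᵒᵖ A] [SMulCommClass Rᵐᵒᵖ S A]
    (B : Type) [AddCommGroup B] [Module R B] : Submodule S (A ⊗[ℤ] B) :=
  Submodule.span S
    {x | ∃ (r : R) (a : A) (b : B), x = (op r • a) ⊗ₜ[ℤ] b - a ⊗ₜ[ℤ] (r • b)}

/-- The balanced tensor product `A ⊗[R] B` of a right `R`-module `A` (with a compatible left
`S`-action making it an `(S,R)`-bimodule) and a left `R`-module `B`; it is a left `S`-module. -/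
def BT (S R : Type) [Ring S] [Ring R]
    (A : Type) [AddCommGroup A] [Module S A] [Module Rᵐᵒᵖ A] [SMulCommClass Rᵐᵒᵖ S A]
    (B : Type) [AddCommGroup B] [Module R B] : Type :=
  (A ⊗[ℤ] B) ⧸ BTrel S R A B

instance (S R : Type) [Ring S] [Ring R]
    (A : Type) [AddCommGroup A] [Module S A] [Module Rᵐᵒᵖ A] [SMulCommClass Rᵐᵒᵖ S A]
    (B : Type) [AddCommGroup B] [Module R B] : AddCommGroup (BT S R A B) :=
  inferInstanceAs (AddCommGroup ((A ⊗[ℤ] B) ⧸ BTrel S R A B))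

instance (S R : Type) [Ring S] [Ring R]
    (A : Type) [AddCommGroup A] [Module S A] [Module Rᵐᵒᵖ A] [SMulCommClass Rᵐᵒᵖ S A]
    (B : Type) [AddCommGroup B] [Module R B] : Module S (BT S R A B) :=
  inferInstanceAs (Module S ((A ⊗[ℤ] B) ⧸ BTrel S R A B))

/-- The elementary tensor `a ⊗ b` in the balanced tensor product `A ⊗[R] B`. -/
def btmul (S R : Type) [Ring S] [Ring R]
    (A : Type) [AddCommGroup A] [Module S A] [Module Rᵐᵒᵖ A] [SMulCommClass Rᵐᵒᵖ S A]
    (B : Type) [AddCommGroup B] [Module R B] (a : A) (b : B) : BT S R A B :=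
  Submodule.Quotient.mk (a ⊗ₜ[ℤ] b)

/-- Functoriality of the balanced tensor product in the second variable:
this is the map `A ⊗[R] f : A ⊗[R] B ⟶ A ⊗[R] B'` induced by `f : B ⟶ B'`. -/
def btmap (S R : Type) [Ring S] [Ring R]
    (A : Type) [AddCommGroup A] [Module S A] [Module Rᵐᵒᵖ A] [SMulCommClass Rᵐᵒᵖ S A]
    {B B' : Type} [AddCommGroup B] [Module R B] [AddCommGroup B'] [Module R B']
    (f : B →ₗ[R] B') : BT S R A B →ₗ[S] BT S R A B' :=
  Submodule.mapQ _ _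
    (TensorProduct.AlgebraTensorModule.map (LinearMap.id (R := S) (M := A))
      (f.restrictScalars ℤ)) <| by
    rw [BTrel, Submodule.span_le]
    rintro x ⟨r, a, b, rfl⟩
    simp only [SetLike.mem_coe, Submodule.mem_comap, map_sub,
      TensorProduct.AlgebraTensorModule.map_tmul, LinearMap.id_coe, id_eq,
      LinearMap.coe_restrictScalars, map_smul]
    exact Submodule.subset_span ⟨r, a, f b, rfl⟩

/-! ## Separable equivalence -/

/-- A separable equivalence between rings `Λ` and `Γ`, given by a `(Λ,Γ)`-bimodule `M` and a
`(Γ,Λ)`-bimodule `N`, each finitely generated and projective as a one-sided module on either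
side, together with a `Λ`-bimodule isomorphism `M ⊗[Γ] N ≅ Λ ⊕ X` and a `Γ`-bimodule
isomorphism `N ⊗[Λ] M ≅ Γ ⊕ Y`.  The compatibility with the right actions is recorded on
elementary tensors (which generate the tensor product). -/
structure SepEq (Λ Γ : Type) [Ring Λ] [Ring Γ]
    (M : Type) [AddCommGroup M] [Module Λ M] [Module Γᵐᵒᵖ M] [SMulCommClass Γᵐᵒᵖ Λ M]
    (N : Type) [AddCommGroup N] [Module Γ N] [Module Λᵐᵒᵖ N] [SMulCommClass Λᵐᵒᵖ Γ N]
    (X : Type) [AddCommGroup X] [Module Λ X] [Module Λᵐᵒᵖ X] [SMulCommClass Λᵐᵒᵖ Λ X]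
    (Y : Type) [AddCommGroup Y] [Module Γ Y] [Module Γᵐᵒᵖ Y] [SMulCommClass Γᵐᵒᵖ Γ Y] :
    Type where
  finite_left_M : Module.Finite Λ M
  projective_left_M : Module.Projective Λ M
  finite_right_M : Module.Finite Γᵐᵒᵖ M
  projective_right_M : Module.Projective Γᵐᵒᵖ M
  finite_left_N : Module.Finite Γ N
  projective_left_N : Module.Projective Γ N
  finite_right_N : Module.Finite Λᵐᵒᵖ N
  projective_right_N : Module.Projective Λᵐᵒᵖ N
  /-- the left `Λ`-linear isomorphism `M ⊗[Γ] N ≅ Λ ⊕ X` -/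
  e : BT Λ Γ M N ≃ₗ[Λ] Λ × X
  /-- `e` is also right `Λ`-linear, i.e. it is a `Λ`-bimodule isomorphism -/
  e_right : ∀ (m : M) (n : N) (l : Λ),
    e (btmul Λ Γ M N m (op l • n)) = op l • e (btmul Λ Γ M N m n)
  /-- the left `Γ`-linear isomorphism `N ⊗[Λ] M ≅ Γ ⊕ Y` -/
  f : BT Γ Λ N M ≃ₗ[Γ] Γ × Y
  /-- `f` is also right `Γ`-linear, i.e. it is a `Γ`-bimodule isomorphism -/
  f_right : ∀ (n : N) (m : M) (g : Γ),
    f (btmul Γ Λ N M n (op g • m)) = op g • f (btmul Γ Λ N M n m)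

/-! ## Ext, orthogonal classes, (co)resolutions, Gorenstein categories -/

/-- `Ext^i_R(A, C) = 0` for all `i ≥ 1`. -/
def extVanishes (R : Type) [Ring R] (A C : Type) [AddCommGroup A] [Module R A]
    [AddCommGroup C] [Module R C] : Prop :=
  ∀ i : ℕ, 1 ≤ i →
    Subsingleton (((Ext ℤ (ModuleCat R) i).obj (Opposite.op (ModuleCat.of R A))).obj
      (ModuleCat.of R C))

/-- The left orthogonal class `⊥𝒞 = {A ∣ Ext^{≥1}(A, C) = 0 for all C ∈ 𝒞}`. -/
def leftPerp (R : Type) [Ring R] (𝒞 : Set (ModuleCat.{0} R)) : Set (ModuleCat.{0} R) :=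
  {A | ∀ C ∈ 𝒞, extVanishes R A C}

/-- The right orthogonal class `𝒞⊥ = {A ∣ Ext^{≥1}(C, A) = 0 for all C ∈ 𝒞}`. -/
def rightPerp (R : Type) [Ring R] (𝒞 : Set (ModuleCat.{0} R)) : Set (ModuleCat.{0} R) :=
  {A | ∀ C ∈ 𝒞, extVanishes R C A}

/-- A class of modules is self-orthogonal if `Ext^{≥1}(C, C') = 0` for all its members. -/
def SelfOrthClass (R : Type) [Ring R] (𝒞 : Set (ModuleCat.{0} R)) : Prop :=
  ∀ C ∈ 𝒞, ∀ C' ∈ 𝒞, extVanishes R C C'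

/-- Membership in `cores 𝒞̃`: `A` admits an exact sequence `0 → A → C^0 → C^1 → ⋯` with all
`C^i ∈ 𝒞` which stays exact after applying `Hom(-, C)` for every `C ∈ 𝒞`. -/
def MemCores (R : Type) [Ring R] (𝒞 : Set (ModuleCat.{0} R)) (A : ModuleCat.{0} R) : Prop :=
  ∃ (P : ℕ → ModuleCat.{0} R) (ι : A →ₗ[R] P 0) (d : ∀ i : ℕ, P i →ₗ[R] P (i + 1)),
    (∀ i, P i ∈ 𝒞) ∧ Function.Injective ⇑ι ∧ Function.Exact ⇑ι ⇑(d 0) ∧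
    (∀ i, Function.Exact ⇑(d i) ⇑(d (i + 1))) ∧
    (∀ C ∈ 𝒞,
      Function.Surjective (fun g : P 0 →ₗ[R] C => g ∘ₗ ι) ∧
      Function.Exact (fun g : P 1 →ₗ[R] C => g ∘ₗ d 0) (fun g : P 0 →ₗ[R] C => g ∘ₗ ι) ∧
      ∀ i, Function.Exact (fun g : P (i + 2) →ₗ[R] C => g ∘ₗ d (i + 1))
        (fun g : P (i + 1) →ₗ[R] C => g ∘ₗ d i))

/-- Membership in `res 𝒞̃`: `A` admits an exact sequence `⋯ → C_1 → C_0 → A → 0` with all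
`C_i ∈ 𝒞` which stays exact after applying `Hom(C, -)` for every `C ∈ 𝒞`. -/
def MemRes (R : Type) [Ring R] (𝒞 : Set (ModuleCat.{0} R)) (A : ModuleCat.{0} R) : Prop :=
  ∃ (P : ℕ → ModuleCat.{0} R) (π : P 0 →ₗ[R] A) (d : ∀ i : ℕ, P (i + 1) →ₗ[R] P i),
    (∀ i, P i ∈ 𝒞) ∧ Function.Surjective ⇑π ∧ Function.Exact ⇑(d 0) ⇑π ∧
    (∀ i, Function.Exact ⇑(d (i + 1)) ⇑(d i)) ∧
    (∀ C ∈ 𝒞,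
      Function.Surjective (fun g : C →ₗ[R] P 0 => π ∘ₗ g) ∧
      Function.Exact (fun g : C →ₗ[R] P 1 => d 0 ∘ₗ g) (fun g : C →ₗ[R] P 0 => π ∘ₗ g) ∧
      ∀ i, Function.Exact (fun g : C →ₗ[R] P (i + 2) => d (i + 1) ∘ₗ g)
        (fun g : C →ₗ[R] P (i + 1) => d i ∘ₗ g))

/-- The right Gorenstein category `r𝒢(𝒞) = ⊥𝒞 ∩ cores 𝒞̃`. -/
def rGor (R : Type) [Ring R] (𝒞 : Set (ModuleCat.{0} R)) : Set (ModuleCat.{0} R) :=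
  {A | A ∈ leftPerp R 𝒞 ∧ MemCores R 𝒞 A}

/-- The left Gorenstein category `l𝒢(𝒞) = 𝒞⊥ ∩ res 𝒞̃`. -/
def lGor (R : Type) [Ring R] (𝒞 : Set (ModuleCat.{0} R)) : Set (ModuleCat.{0} R) :=
  {A | A ∈ rightPerp R 𝒞 ∧ MemRes R 𝒞 A}

/-- Membership in the Gorenstein category `𝒢(𝒞)`: there is an exact complex with all terms
in `𝒞`, which is both `Hom(𝒞, -)`-exact and `Hom(-, 𝒞)`-exact, such that `A` is isomorphic
to one of its images. -/
def MemGor (R : Type) [Ring R] (𝒞 : Set (ModuleCat.{0} R)) (A : ModuleCat.{0} R) : Prop :=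
  ∃ (P : ℤ → ModuleCat.{0} R) (d : ∀ i : ℤ, P i →ₗ[R] P (i + 1)),
    (∀ i, P i ∈ 𝒞) ∧ (∀ i, Function.Exact ⇑(d i) ⇑(d (i + 1))) ∧
    (∀ C ∈ 𝒞, ∀ i : ℤ, Function.Exact (fun g : P (i + 1 + 1) →ₗ[R] C => g ∘ₗ d (i + 1))
      (fun g : P (i + 1) →ₗ[R] C => g ∘ₗ d i)) ∧
    (∀ C ∈ 𝒞, ∀ i : ℤ, Function.Exact (fun g : C →ₗ[R] P i => d i ∘ₗ g)
      (fun g : C →ₗ[R] P (i + 1) => d (i + 1) ∘ₗ g)) ∧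
    Nonempty (A ≃ₗ[R] LinearMap.range (d 0))

/-- The class of projective left `R`-modules. -/
def projClass (R : Type) [Ring R] : Set (ModuleCat.{0} R) :=
  {P | Module.Projective R P}

/-- The image class `T_A(𝒞)`: the class of left `S`-modules isomorphic to `A ⊗[R] C`
for some `C ∈ 𝒞`. -/
def tensorClass (S R : Type) [Ring S] [Ring R]
    (A : Type) [AddCommGroup A] [Module S A] [Module Rᵐᵒᵖ A] [SMulCommClass Rᵐᵒᵖ S A]
    (𝒞 : Set (ModuleCat.{0} R)) : Set (ModuleCat.{0} S) :=
  {D | ∃ C ∈ 𝒞, Nonempty (D ≃ₗ[S] BT S R A C)}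

/-- `Add C`: the class of modules isomorphic to direct summands of arbitrary direct sums of
copies of `C`. -/
def AddClass (R : Type) [Ring R] (C : Type) [AddCommGroup C] [Module R C] :
    Set (ModuleCat.{0} R) :=
  {D | ∃ (ι : Type) (s : D →ₗ[R] (ι →₀ C)) (r : (ι →₀ C) →ₗ[R] D), r ∘ₗ s = LinearMap.id}

/-- `add C`: the class of modules isomorphic to direct summands of finite direct sums of
copies of `C`. -/
def addClass (R : Type) [Ring R] (C : Type) [AddCommGroup C] [Module R C] :
    Set (ModuleCat.{0} R) :=
  {D | ∃ (n : ℕ) (s : D →ₗ[R] (Fin n → C)) (r : (Fin n → C) →ₗ[R] D), r ∘ₗ s = LinearMap.id}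

/-- An additive subcategory of `Mod R` closed under isomorphisms, viewed as a class of
modules: it is closed under isomorphisms, contains a zero module and is closed under finite
direct sums. -/
structure IsAdditiveSubcat (R : Type) [Ring R] (𝒞 : Set (ModuleCat.{0} R)) : Prop where
  iso_mem : ∀ {A B : ModuleCat.{0} R}, A ∈ 𝒞 → Nonempty (A ≃ₗ[R] B) → B ∈ 𝒞
  zero_mem : ModuleCat.of R PUnit ∈ 𝒞
  sum_mem : ∀ {A B : ModuleCat.{0} R}, A ∈ 𝒞 → B ∈ 𝒞 → ModuleCat.of R (A × B) ∈ 𝒞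

/-- `M` is a projective generator: it is projective and the ring is a direct summand of a
finite direct sum of copies of `M`. -/
def IsProjectiveGenerator (R : Type) [Ring R] (M : Type) [AddCommGroup M] [Module R M] :
    Prop :=
  Module.Projective R M ∧
    ∃ (n : ℕ) (s : R →ₗ[R] (Fin n → M)) (r : (Fin n → M) →ₗ[R] R), r ∘ₗ s = LinearMap.id

/-- `G` is Gorenstein projective: `G` is an image of a totally acyclic complex of
projectives, i.e. an exact complex of projective modules which stays exact after applying
`Hom(-, P)` for every projective module `P`. -/
def IsGorensteinProjective (R : Type) [Ring R] (G : Type) [AddCommGroup G] [Module R G] :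
    Prop :=
  ∃ (P : ℤ → ModuleCat.{0} R) (d : ∀ i : ℤ, P i →ₗ[R] P (i + 1)),
    (∀ i, Module.Projective R (P i)) ∧ (∀ i, Function.Exact ⇑(d i) ⇑(d (i + 1))) ∧
    (∀ (Q : ModuleCat.{0} R), Module.Projective R Q → ∀ i : ℤ,
      Function.Exact (fun g : P (i + 1 + 1) →ₗ[R] Q => g ∘ₗ d (i + 1))
        (fun g : P (i + 1) →ₗ[R] Q => g ∘ₗ d i)) ∧
    Nonempty (G ≃ₗ[R] LinearMap.range (d 0))

/-- `G` is Gorenstein injective: `G` is an image of an exact complex of injective modules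
which stays exact after applying `Hom(I, -)` for every injective module `I`. -/
def IsGorensteinInjective (R : Type) [Ring R] (G : Type) [AddCommGroup G] [Module R G] :
    Prop :=
  ∃ (P : ℤ → ModuleCat.{0} R) (d : ∀ i : ℤ, P i →ₗ[R] P (i + 1)),
    (∀ i, Module.Injective R (P i)) ∧ (∀ i, Function.Exact ⇑(d i) ⇑(d (i + 1))) ∧
    (∀ (I : ModuleCat.{0} R), Module.Injective R I → ∀ i : ℤ,
      Function.Exact (fun g : I →ₗ[R] P i => d i ∘ₗ g)
        (fun g : I →ₗ[R] P (i + 1) => d (i + 1) ∘ₗ g)) ∧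
    Nonempty (G ≃ₗ[R] LinearMap.range (d 0))

/-- `C` is a Wakamatsu tilting left `R`-module: `C` is self-orthogonal, admits a resolution
by finitely generated projective modules, and there is an exact sequence
`0 → R → C^0 → C^1 → ⋯` with all `C^i ∈ add C` which stays exact under `Hom(-, add C)`. -/
def IsWakamatsuTilting (R : Type) [Ring R] (C : Type) [AddCommGroup C] [Module R C] :
    Prop :=
  extVanishes R C C ∧
  (∃ (P : ℕ → ModuleCat.{0} R) (π : P 0 →ₗ[R] C) (d : ∀ i : ℕ, P (i + 1) →ₗ[R] P i),
    (∀ i, Module.Finite R (P i) ∧ Module.Projective R (P i)) ∧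
    Function.Surjective ⇑π ∧ Function.Exact ⇑(d 0) ⇑π ∧
    (∀ i, Function.Exact ⇑(d (i + 1)) ⇑(d i))) ∧
  MemCores R (addClass R C) (ModuleCat.of R R)

end

noncomputable section AuxSepEq

open TensorProduct MulOpposite

private lemma sum_smul_single_one (R : Type*) [Ring R] {n : ℕ} (x : Fin n → R) :
    ∑ i, x i • (Pi.single i (1 : R) : Fin n → R) = x := by
  funext j
  rw [Finset.sum_apply]
  simp [Pi.single_apply]

variable (S R : Type) [Ring S] [Ring R]
variable (A : Type) [AddCommGroup A] [Module S A] [Module Rᵐᵒᵖ A] [SMulCommClass Rᵐᵒᵖ S A]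
variable (B : Type) [AddCommGroup B] [Module R B]

private lemma btmul_rel (r : R) (a : A) (b : B) :
    btmul S R A B (op r • a) b = btmul S R A B a (r • b) := by
  show (Submodule.Quotient.mk _ : (A ⊗[ℤ] B) ⧸ BTrel S R A B) = Submodule.Quotient.mk _
  rw [Submodule.Quotient.eq]
  exact Submodule.subset_span ⟨r, a, b, rfl⟩

private theorem BT.gen_left (X : Type) [AddCommGroup X] [Module S X]
    (hfin : Module.Finite R B) (hproj : Module.Projective R B)
    (e : BT S R A B ≃ₗ[S] S × X) :
    ∃ (n : ℕ) (s : S →ₗ[S] (Fin n → A)) (r : (Fin n → A) →ₗ[S] S),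
      r ∘ₗ s = LinearMap.id := by
  haveI := hfin; haveI := hproj
  obtain ⟨n, q, p, -, -, hqp⟩ := Module.Finite.exists_comp_eq_id_of_projective R B
  obtain ⟨z, hz⟩ := Submodule.Quotient.mk_surjective (BTrel S R A B) (e.symm (1, 0))
  -- the map `A ⊗ B → A^n`, `a ⊗ b ↦ (op (p b i) • a)_i`
  let φ₀ : A ⊗[ℤ] B →ₗ[ℤ] (Fin n → A) :=
    TensorProduct.lift <| AddMonoidHom.toIntLinearMap
      { toFun := fun a => AddMonoidHom.toIntLinearMap
          { toFun := fun b i => op (p b i) • a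
            map_zero' := by funext i; simp
            map_add' := fun b b' => by funext i; simp [add_smul] }
        map_zero' := by
          refine LinearMap.ext fun b => funext fun i => ?_
          exact smul_zero _
        map_add' := fun a a' => by
          refine LinearMap.ext fun b => funext fun i => ?_
          exact smul_add _ _ _ }
  have φ₀_tmul : ∀ (a : A) (b : B), φ₀ (a ⊗ₜ[ℤ] b) = fun i => op (p b i) • a :=
    fun a b => rfl
  have φ₀_smul : ∀ (c : S) (x : A ⊗[ℤ] B), φ₀ (c • x) = c • φ₀ x := by
    intro c x
    induction x using TensorProduct.induction_on with
    | zero => rw [smul_zero, map_zero, smul_zero]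
    | tmul a b =>
      rw [TensorProduct.smul_tmul', φ₀_tmul, φ₀_tmul]
      funext i
      exact smul_comm _ _ _
    | add x y hx hy => rw [smul_add, map_add, map_add, hx, hy, smul_add]
  let φ : A ⊗[ℤ] B →ₗ[S] (Fin n → A) :=
    { toFun := φ₀, map_add' := fun x y => map_add φ₀ x y, map_smul' := φ₀_smul }
  -- the map `A^n → BT`, `v ↦ ∑ mk (v i ⊗ q (single i 1))`
  let μ : B → A →ₗ[S] A ⊗[ℤ] B := fun b =>
    { toFun := fun a => a ⊗ₜ[ℤ] b
      map_add' := fun a a' => TensorProduct.add_tmul a a' b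
      map_smul' := fun c a => (TensorProduct.smul_tmul' c a b).symm }
  let ψ : (Fin n → A) →ₗ[S] BT S R A B :=
    ∑ i : Fin n, (BTrel S R A B).mkQ ∘ₗ μ (q (Pi.single i 1)) ∘ₗ LinearMap.proj i
  have ψ_apply : ∀ v : Fin n → A,
      ψ v = ∑ i : Fin n, Submodule.Quotient.mk (v i ⊗ₜ[ℤ] q (Pi.single i 1)) := by
    intro v
    rw [LinearMap.sum_apply]
    rfl
  have key : ∀ x : A ⊗[ℤ] B, ψ (φ x) = Submodule.Quotient.mk x := by
    intro x
    induction x using TensorProduct.induction_on with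
    | zero => simp; rfl
    | tmul a b =>
      have hq : (∑ i, p b i • q (Pi.single i (1 : R))) = b := by
        have h1 : (∑ i, p b i • q (Pi.single i (1 : R)))
            = q (∑ i, p b i • (Pi.single i (1 : R) : Fin n → R)) := by
          rw [map_sum]
          exact Finset.sum_congr rfl fun i _ => (map_smul q _ _).symm
        rw [h1, sum_smul_single_one, ← LinearMap.comp_apply, hqp, LinearMap.id_apply]
      calc @Eq (BT S R A B) (ψ (φ (a ⊗ₜ[ℤ] b))) (∑ i : Fin n,
              Submodule.Quotient.mk ((op (p b i) • a) ⊗ₜ[ℤ] q (Pi.single i 1))) := by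
            rw [show φ (a ⊗ₜ[ℤ] b) = fun i => op (p b i) • a from rfl, ψ_apply]
            rfl
        @Eq (BT S R A B) _ (∑ i : Fin n,
              Submodule.Quotient.mk (a ⊗ₜ[ℤ] (p b i • q (Pi.single i 1)))) := by
            exact Finset.sum_congr rfl fun i _ => btmul_rel S R A B _ _ _
        @Eq (BT S R A B) _ (btmul S R A B a (∑ i, p b i • q (Pi.single i (1 : R)))) := by
            exact ((congrArg (BTrel S R A B).mkQ (TensorProduct.tmul_sum _ _ _)).trans
              (map_sum (BTrel S R A B).mkQ _ _)).symm
        @Eq (BT S R A B) _ (btmul S R A B a b) := by rw [hq]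
    | add x y hx hy =>
      rw [map_add, map_add, hx, hy, Submodule.Quotient.mk_add]
      rfl
  refine ⟨n, φ ∘ₗ LinearMap.toSpanSingleton S _ z,
    LinearMap.fst S S X ∘ₗ e.toLinearMap ∘ₗ ψ, ?_⟩
  refine LinearMap.ext fun c => ?_
  simp only [LinearMap.comp_apply, LinearMap.toSpanSingleton_apply, LinearEquiv.coe_coe,
    LinearMap.fst_apply, LinearMap.id_apply]
  rw [key (c • z)]
  have hmk : (Submodule.Quotient.mk (c • z) : BT S R A B) = c • e.symm (1, 0) := by
    rw [← hz]; rfl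
  rw [hmk, map_smul, e.apply_symm_apply]
  simp

private theorem BT.gen_right (X : Type) [AddCommGroup X] [Module S X] [Module Sᵐᵒᵖ X]
    [Module Sᵐᵒᵖ B] [SMulCommClass Sᵐᵒᵖ R B]
    (hfin : Module.Finite Rᵐᵒᵖ A) (hproj : Module.Projective Rᵐᵒᵖ A)
    (e : BT S R A B ≃ₗ[S] S × X)
    (he : ∀ (a : A) (b : B) (t : S),
      e (btmul S R A B a (op t • b)) = op t • e (btmul S R A B a b)) :
    ∃ (n : ℕ) (s : Sᵐᵒᵖ →ₗ[Sᵐᵒᵖ] (Fin n → B)) (r : (Fin n → B) →ₗ[Sᵐᵒᵖ] Sᵐᵒᵖ),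
      r ∘ₗ s = LinearMap.id := by
  haveI := hfin; haveI := hproj
  obtain ⟨n, q, p, -, -, hqp⟩ := Module.Finite.exists_comp_eq_id_of_projective Rᵐᵒᵖ A
  obtain ⟨z, hz⟩ := Submodule.Quotient.mk_surjective (BTrel S R A B) (e.symm (1, 0))
  -- the map `A ⊗ B → B^n`, `a ⊗ b ↦ ((p a i).unop • b)_i`
  let φ₀ : A ⊗[ℤ] B →ₗ[ℤ] (Fin n → B) :=
    TensorProduct.lift <| AddMonoidHom.toIntLinearMap
      { toFun := fun a => AddMonoidHom.toIntLinearMap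
          { toFun := fun b i => (p a i).unop • b
            map_zero' := by funext i; exact smul_zero _
            map_add' := fun b b' => by funext i; exact smul_add _ _ _ }
        map_zero' := by
          refine LinearMap.ext fun b => funext fun i => ?_
          simp
        map_add' := fun a a' => by
          refine LinearMap.ext fun b => funext fun i => ?_
          simp [add_smul] }
  have φ₀_tmul : ∀ (a : A) (b : B), φ₀ (a ⊗ₜ[ℤ] b) = fun i => (p a i).unop • b :=
    fun a b => rfl
  -- right multiplication by `u` on `B` and on `A ⊗ B`
  let fB : S → B →ₗ[ℤ] B := fun u =>
    AddMonoidHom.toIntLinearMap (DistribMulAction.toAddMonoidHom B (op u))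
  let ρ : S → (A ⊗[ℤ] B →ₗ[ℤ] A ⊗[ℤ] B) := fun u => LinearMap.lTensor A (fB u)
  have ρ_tmul : ∀ (u : S) (a : A) (b : B), ρ u (a ⊗ₜ[ℤ] b) = a ⊗ₜ[ℤ] (op u • b) :=
    fun u a b => rfl
  -- the map `B^n → BT`
  let ψf : (Fin n → B) → BT S R A B := fun v =>
    ∑ i : Fin n, Submodule.Quotient.mk (q (Pi.single i 1) ⊗ₜ[ℤ] v i)
  have ψf_add : ∀ v w, ψf (v + w) = ψf v + ψf w := by
    intro v w
    rw [show ψf (v + w) = ∑ i : Fin n,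
      Submodule.Quotient.mk (q (Pi.single i 1) ⊗ₜ[ℤ] (v i + w i)) from rfl]
    erw [← Finset.sum_add_distrib]
    exact Finset.sum_congr rfl fun i _ => by
      rw [TensorProduct.tmul_add, Submodule.Quotient.mk_add]
      rfl
  have key1 : ∀ x : A ⊗[ℤ] B, ψf (φ₀ x) = Submodule.Quotient.mk x := by
    intro x
    induction x using TensorProduct.induction_on with
    | zero => simp [ψf]; exact Finset.sum_const_zero
    | tmul a b =>
      have hq : (∑ i, p a i • q (Pi.single i (1 : Rᵐᵒᵖ))) = a := by
        have h1 : (∑ i, p a i • q (Pi.single i (1 : Rᵐᵒᵖ)))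
            = q (∑ i, p a i • (Pi.single i (1 : Rᵐᵒᵖ) : Fin n → Rᵐᵒᵖ)) := by
          rw [map_sum]
          exact Finset.sum_congr rfl fun i _ => (map_smul q _ _).symm
        rw [h1, sum_smul_single_one, ← LinearMap.comp_apply, hqp, LinearMap.id_apply]
      calc @Eq (BT S R A B) (ψf (φ₀ (a ⊗ₜ[ℤ] b))) (∑ i : Fin n,
              Submodule.Quotient.mk (q (Pi.single i 1) ⊗ₜ[ℤ] ((p a i).unop • b))) := by
            rw [φ₀_tmul]
        @Eq (BT S R A B) _ (∑ i : Fin n,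
              Submodule.Quotient.mk ((p a i • q (Pi.single i 1)) ⊗ₜ[ℤ] b)) := by
            refine Finset.sum_congr rfl fun i _ => ?_
            have := (btmul_rel S R A B ((p a i).unop) (q (Pi.single i 1)) b).symm
            rwa [op_unop] at this
        @Eq (BT S R A B) _ (btmul S R A B (∑ i, p a i • q (Pi.single i (1 : Rᵐᵒᵖ))) b) := by
            exact ((congrArg (BTrel S R A B).mkQ (TensorProduct.sum_tmul _ _ _)).trans
              (map_sum (BTrel S R A B).mkQ _ _)).symm
        @Eq (BT S R A B) _ (btmul S R A B a b) := by rw [hq]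
    | add x y hx hy =>
      rw [map_add, ψf_add, hx, hy, Submodule.Quotient.mk_add]
      rfl
  have key2 : ∀ (u : S) (x : A ⊗[ℤ] B), φ₀ (ρ u x) = op u • φ₀ x := by
    intro u x
    induction x using TensorProduct.induction_on with
    | zero => rw [map_zero, map_zero, smul_zero]
    | tmul a b =>
      rw [ρ_tmul, φ₀_tmul, φ₀_tmul]
      funext i
      exact (smul_comm _ _ _).symm
    | add x y hx hy => rw [map_add, map_add, map_add, hx, hy, smul_add]
  have key3 : ∀ (u : S) (x : A ⊗[ℤ] B),
      e (Submodule.Quotient.mk (ρ u x)) = op u • e (Submodule.Quotient.mk x) := by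
    intro u x
    induction x using TensorProduct.induction_on with
    | zero => rw [map_zero]; simp; erw [map_zero, smul_zero]
    | tmul a b => exact he a b u
    | add x y hx hy =>
      erw [show (ρ u) (x + y) = (ρ u) x + (ρ u) y from map_add _ _ _,
        Submodule.Quotient.mk_add, Submodule.Quotient.mk_add, map_add, map_add,
        hx, hy, smul_add]
  let rB : (Fin n → B) →ₗ[Sᵐᵒᵖ] Sᵐᵒᵖ :=
    { toFun := fun v => op ((e (ψf v)).1)
      map_add' := fun v w => by
        show op ((e (ψf (v + w))).1) = op ((e (ψf v)).1) + op ((e (ψf w)).1)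
        rw [ψf_add, map_add, Prod.fst_add, MulOpposite.op_add]
      map_smul' := fun c v => by
        have h1 : ψf (c • v) = ∑ i : Fin n,
            Submodule.Quotient.mk (q (Pi.single i 1) ⊗ₜ[ℤ] (op c.unop • v i)) := by
          refine Finset.sum_congr rfl fun i _ => ?_
          rw [Pi.smul_apply, op_unop]
        have h2 : e (ψf (c • v)) = op c.unop • e (ψf v) := by
          erw [h1, map_sum, show e (ψf v)
            = ∑ i : Fin n, e (Submodule.Quotient.mk (q (Pi.single i 1) ⊗ₜ[ℤ] v i))
            from map_sum e _ _, Finset.smul_sum]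
          exact Finset.sum_congr rfl fun i _ => he _ _ _
        show op ((e (ψf (c • v))).1) = c • op ((e (ψf v)).1)
        rw [h2, Prod.smul_fst, op_smul_eq_mul, smul_eq_mul]
        conv_rhs => rw [← op_unop c]
        exact op_mul _ _ }
  have fB_apply : ∀ (u : S) (b : B), fB u b = op u • b := fun u b => rfl
  let sB : Sᵐᵒᵖ →ₗ[Sᵐᵒᵖ] (Fin n → B) :=
    { toFun := fun t => φ₀ (ρ t.unop z)
      map_add' := fun t t' => by
        have hfB : fB (t + t').unop = fB t.unop + fB t'.unop := by
          refine LinearMap.ext fun b => ?_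
          rw [fB_apply, LinearMap.add_apply, fB_apply, fB_apply,
            op_unop, op_unop, op_unop]
          exact add_smul t t' b
        show φ₀ (LinearMap.lTensor A (fB (t + t').unop) z) = _
        rw [hfB, LinearMap.lTensor_add, LinearMap.add_apply, map_add]
        rfl
      map_smul' := fun c t => by
        have hfB : fB (c * t).unop = (fB c.unop) ∘ₗ (fB t.unop) := by
          refine LinearMap.ext fun b => ?_
          rw [LinearMap.comp_apply, fB_apply, fB_apply, fB_apply, unop_mul, op_mul,
            mul_smul]
        show φ₀ (LinearMap.lTensor A (fB (c * t).unop) z) = c • φ₀ (ρ t.unop z)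
        rw [hfB, LinearMap.lTensor_comp, LinearMap.comp_apply]
        rw [show (LinearMap.lTensor A (fB c.unop)) ((LinearMap.lTensor A (fB t.unop)) z)
          = ρ c.unop (ρ t.unop z) from rfl]
        rw [key2, op_unop] }
  refine ⟨n, sB, rB, ?_⟩
  refine LinearMap.ext fun t => ?_
  show op ((e (ψf (φ₀ (ρ t.unop z)))).1) = t
  rw [key1, key3, hz, e.apply_symm_apply, Prod.smul_fst, op_smul_eq_mul, one_mul, op_unop]

end AuxSepEq

theorem separable_equivalence_projective_generators (Λ Γ : Type) [Ring Λ] [Ring Γ]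
    (M : Type) [AddCommGroup M] [Module Λ M] [Module Γᵐᵒᵖ M] [SMulCommClass Γᵐᵒᵖ Λ M]
    (N : Type) [AddCommGroup N] [Module Γ N] [Module Λᵐᵒᵖ N] [SMulCommClass Λᵐᵒᵖ Γ N]
    (X : Type) [AddCommGroup X] [Module Λ X] [Module Λᵐᵒᵖ X] [SMulCommClass Λᵐᵒᵖ Λ X]
    (Y : Type) [AddCommGroup Y] [Module Γ Y] [Module Γᵐᵒᵖ Y] [SMulCommClass Γᵐᵒᵖ Γ Y]
    (sep : SepEq Λ Γ M N X Y) :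
    IsProjectiveGenerator Λ M ∧ IsProjectiveGenerator Γ N ∧
      IsProjectiveGenerator Γᵐᵒᵖ M ∧ IsProjectiveGenerator Λᵐᵒᵖ N := by
  obtain ⟨fM, pM, fM', pM', fN, pN, fN', pN', e, he, f, hf⟩ := sep
  exact ⟨⟨pM, BT.gen_left Λ Γ M N X fN pN e⟩,
    ⟨pN, BT.gen_left Γ Λ N M Y fM pM f⟩,
    ⟨pM', BT.gen_right Γ Λ N M Y fN' pN' f hf⟩,
    ⟨pN', BT.gen_right Λ Γ M N X fM' pM' e he⟩⟩
end

section
/- Let Λ and Γ be separably equivalent via _ΛM_Γ and _ΓN_Λ, let 𝒞 be a self-orthogonal additive subcategory of Mod Λ closed under isomorphisms, and let 𝒟 be a subcategory of Mod Γ with T_N(𝒞) ⊆ 𝒟 and T_M(𝒟) ⊆ 𝒞. If a Γ-module L lies in cores (T_N(𝒞))̃, then L lies in cores 𝒟̃. -/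
open TensorProduct CategoryTheory MulOpposite

noncomputable section
namespace SepAux

variable {S R : Type} [Ring S] [Ring R]
    {A : Type} [AddCommGroup A] [Module S A] [Module Rᵐᵒᵖ A] [SMulCommClass Rᵐᵒᵖ S A]
    {B : Type} [AddCommGroup B] [Module R B]

lemma btmul_add_left (a a' : A) (b : B) :
    btmul S R A B (a + a') b = btmul S R A B a b + btmul S R A B a' b := by
  show Submodule.Quotient.mk _ = _
  rw [TensorProduct.add_tmul, Submodule.Quotient.mk_add]; rfl

lemma btmul_add_right (a : A) (b b' : B) :
    btmul S R A B a (b + b') = btmul S R A B a b + btmul S R A B a b' := by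
  show Submodule.Quotient.mk _ = _
  rw [TensorProduct.tmul_add, Submodule.Quotient.mk_add]; rfl

lemma btmul_smul_left (s : S) (a : A) (b : B) :
    btmul S R A B (s • a) b = s • btmul S R A B a b := by
  show Submodule.Quotient.mk _ = _
  rw [← TensorProduct.smul_tmul', Submodule.Quotient.mk_smul]; rfl

lemma btmul_zero_left (b : B) : btmul S R A B 0 b = 0 := by
  show Submodule.Quotient.mk _ = _
  rw [TensorProduct.zero_tmul, Submodule.Quotient.mk_zero]; rfl

lemma btmul_zero_right (a : A) : btmul S R A B a 0 = 0 := by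
  show Submodule.Quotient.mk _ = _
  rw [TensorProduct.tmul_zero, Submodule.Quotient.mk_zero]; rfl

lemma btmul_rel (r : R) (a : A) (b : B) :
    btmul S R A B (op r • a) b = btmul S R A B a (r • b) := by
  refine (Submodule.Quotient.eq _).mpr ?_
  exact Submodule.subset_span ⟨r, a, b, rfl⟩

lemma bt_induction {motive : BT S R A B → Prop}
    (zero : motive 0) (mul : ∀ a b, motive (btmul S R A B a b))
    (add : ∀ x y, motive x → motive y → motive (x + y)) : ∀ x, motive x := by
  intro x
  obtain ⟨y, rfl⟩ := Submodule.Quotient.mk_surjective _ x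
  induction y using TensorProduct.induction_on with
  | zero => rw [Submodule.Quotient.mk_zero]; exact zero
  | tmul a b => exact mul a b
  | add y z hy hz => rw [Submodule.Quotient.mk_add]; exact add _ _ hy hz

/-- `S`-linear lift out of the balanced tensor product. -/
def btlift {P : Type} [AddCommGroup P] [Module S P]
    (φ : A →ₗ[S] (B →ₗ[ℤ] P))
    (hφ : ∀ (r : R) (a : A) (b : B), φ (op r • a) b = φ a (r • b)) :
    BT S R A B →ₗ[S] P :=
  Submodule.liftQ _ (TensorProduct.AlgebraTensorModule.lift φ) (by
    rw [BTrel, Submodule.span_le]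
    rintro x ⟨r, a, b, rfl⟩
    simp only [SetLike.mem_coe, LinearMap.mem_ker, map_sub,
      TensorProduct.AlgebraTensorModule.lift_tmul, hφ, sub_self])

@[simp] lemma btlift_btmul {P : Type} [AddCommGroup P] [Module S P]
    (φ : A →ₗ[S] (B →ₗ[ℤ] P)) (hφ) (a : A) (b : B) :
    btlift φ hφ (btmul S R A B a b) = φ a b := by
  show Submodule.liftQ _ _ _ (Submodule.Quotient.mk _) = _
  rw [Submodule.liftQ_apply, TensorProduct.AlgebraTensorModule.lift_tmul]

lemma smul_mem_int_span (s : S) (y : A ⊗[ℤ] B)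
    (hy : y ∈ Submodule.span ℤ
      {x | ∃ (r : R) (a : A) (b : B), x = (op r • a) ⊗ₜ[ℤ] b - a ⊗ₜ[ℤ] (r • b)}) :
    s • y ∈ Submodule.span ℤ
      {x | ∃ (r : R) (a : A) (b : B), x = (op r • a) ⊗ₜ[ℤ] b - a ⊗ₜ[ℤ] (r • b)} := by
  induction hy using Submodule.span_induction with
  | mem z hz =>
    obtain ⟨r, a, b, rfl⟩ := hz
    refine Submodule.subset_span ⟨r, s • a, b, ?_⟩
    rw [smul_sub, TensorProduct.smul_tmul', TensorProduct.smul_tmul',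
      smul_comm (op r) s a]
  | zero => rw [smul_zero]; exact zero_mem _
  | add y z _ _ hy hz => rw [smul_add]; exact add_mem hy hz
  | smul k y _ hy => rw [smul_comm]; exact Submodule.smul_mem _ k hy

lemma btrel_subset_int_span (x : A ⊗[ℤ] B) (hx : x ∈ BTrel S R A B) :
    x ∈ Submodule.span ℤ
      {x | ∃ (r : R) (a : A) (b : B), x = (op r • a) ⊗ₜ[ℤ] b - a ⊗ₜ[ℤ] (r • b)} := by
  induction hx using Submodule.span_induction with
  | mem y hy => exact Submodule.subset_span hy
  | zero => exact zero_mem _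
  | add y z _ _ hy hz => exact add_mem hy hz
  | smul s y _ ih => exact smul_mem_int_span s y ih

/-- `ℤ`-linear lift out of the balanced tensor product. -/
def btliftInt {P : Type} [AddCommGroup P]
    (φ : A →ₗ[ℤ] (B →ₗ[ℤ] P))
    (hφ : ∀ (r : R) (a : A) (b : B), φ (op r • a) b = φ a (r • b)) :
    BT S R A B →ₗ[ℤ] P :=
  (Submodule.liftQ ((BTrel S R A B).restrictScalars ℤ) (TensorProduct.lift φ) (by
    intro x hx
    rw [Submodule.restrictScalars_mem] at hx
    refine Submodule.span_le.mpr ?_ (btrel_subset_int_span x hx)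
    rintro y ⟨r, a, b, rfl⟩
    show TensorProduct.lift φ ((op r • a) ⊗ₜ[ℤ] b - a ⊗ₜ[ℤ] (r • b)) = 0
    rw [map_sub, TensorProduct.lift.tmul, TensorProduct.lift.tmul,
      hφ, sub_self])) ∘ₗ
    (Submodule.Quotient.restrictScalarsEquiv ℤ (BTrel S R A B)).symm.toLinearMap

@[simp] lemma btliftInt_btmul {P : Type} [AddCommGroup P]
    (φ : A →ₗ[ℤ] (B →ₗ[ℤ] P)) (hφ) (a : A) (b : B) :
    btliftInt (S := S) φ hφ (btmul S R A B a b) = φ a b := by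
  rfl

@[simp] lemma btmap_btmul {B B' : Type} [AddCommGroup B] [Module R B]
    [AddCommGroup B'] [Module R B'] (f : B →ₗ[R] B') (a : A) (b : B) :
    btmap S R A f (btmul S R A B a b) = btmul S R A B' a (f b) := by
  show Submodule.mapQ _ _ _ _ (Submodule.Quotient.mk _) = _
  rw [Submodule.mapQ_apply, TensorProduct.AlgebraTensorModule.map_tmul]
  rfl

end SepAux
end

noncomputable section
namespace SepAux

variable {Λ Γ : Type} [Ring Λ] [Ring Γ]
    {M : Type} [AddCommGroup M] [Module Λ M] [Module Γᵐᵒᵖ M] [SMulCommClass Γᵐᵒᵖ Λ M]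
    {N : Type} [AddCommGroup N] [Module Γ N] [Module Λᵐᵒᵖ N] [SMulCommClass Λᵐᵒᵖ Γ N]
    {X : Type} [AddCommGroup X] [Module Λ X] [Module Λᵐᵒᵖ X] [SMulCommClass Λᵐᵒᵖ Λ X]
    {Y : Type} [AddCommGroup Y] [Module Γ Y] [Module Γᵐᵒᵖ Y] [SMulCommClass Γᵐᵒᵖ Γ Y]
    (sep : SepEq Λ Γ M N X Y)
    (D : Type) [AddCommGroup D] [Module Γ D]

/-- right multiplication by `γ` on `M`, as a `Λ`-linear map -/
def opSmulM (γ : Γ) : M →ₗ[Λ] M where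
  toFun := (op γ • ·)
  map_add' := smul_add (op γ)
  map_smul' := fun l m => (smul_comm (op γ) l m)

/-- the canonical element of `N ⊗[Λ] M` mapping to `(1,0)` -/
def z0 : BT Γ Λ N M := sep.f.symm (1, 0)

lemma rho_z0 (γ : Γ) :
    btmap Γ Λ N (opSmulM (M := M) γ) (z0 sep) = γ • z0 sep := by
  apply sep.f.injective
  have key : ∀ w : BT Γ Λ N M,
      sep.f (btmap Γ Λ N (opSmulM (M := M) γ) w) = op γ • sep.f w := by
    refine bt_induction ?_ ?_ ?_
    · rw [map_zero, map_zero, smul_zero]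
    · intro n m
      rw [btmap_btmul]
      exact sep.f_right n m γ
    · intro x y hx hy
      rw [map_add, map_add, map_add, hx, hy, smul_add]
  rw [key, map_smul, z0, LinearEquiv.apply_symm_apply]
  ext
  · show (1 : Γ) * γ = γ * 1
    rw [one_mul, mul_one]
  · show op γ • (0 : Y) = γ • (0 : Y)
    rw [smul_zero, smul_zero]

/-- the bilinear datum for `α_d : N ⊗[Λ] M → N ⊗[Λ] (M ⊗[Γ] D)` -/
def alphaAux (d : D) : N →ₗ[Γ] (M →ₗ[ℤ] BT Γ Λ N (BT Λ Γ M D)) where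
  toFun n := AddMonoidHom.toIntLinearMap
    { toFun := fun m => btmul Γ Λ N (BT Λ Γ M D) n (btmul Λ Γ M D m d)
      map_zero' := by rw [btmul_zero_left, btmul_zero_right]
      map_add' := fun m m' => by rw [btmul_add_left, btmul_add_right] }
  map_add' n n' := LinearMap.ext fun m => btmul_add_left n n' _
  map_smul' γ n := LinearMap.ext fun m => by
    show btmul Γ Λ N (BT Λ Γ M D) (γ • n) _ = γ • btmul Γ Λ N (BT Λ Γ M D) n _
    rw [btmul_smul_left]

def alpha (d : D) : BT Γ Λ N M →ₗ[Γ] BT Γ Λ N (BT Λ Γ M D) :=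
  btlift (alphaAux D d) (fun l n m => by
    show btmul Γ Λ N (BT Λ Γ M D) (op l • n) (btmul Λ Γ M D m d)
      = btmul Γ Λ N (BT Λ Γ M D) n (btmul Λ Γ M D (l • m) d)
    rw [btmul_rel, btmul_smul_left (S := Λ) (R := Γ) l m d])

lemma alpha_btmul (d : D) (n : N) (m : M) :
    alpha D d (btmul Γ Λ N M n m)
      = btmul Γ Λ N (BT Λ Γ M D) n (btmul Λ Γ M D m d) := by
  rw [alpha, btlift_btmul]; rfl

/-- the unit map `D → N ⊗[Λ] (M ⊗[Γ] D)` -/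
def uMap : D →ₗ[Γ] BT Γ Λ N (BT Λ Γ M D) where
  toFun d := alpha D d (z0 sep)
  map_add' d d' := by
    have key : ∀ z : BT Γ Λ N M, alpha D (d + d') z = alpha D d z + alpha D d' z := by
      refine bt_induction ?_ ?_ ?_
      · rw [map_zero, map_zero, map_zero, add_zero]
      · intro n m
        rw [alpha_btmul, alpha_btmul, alpha_btmul, btmul_add_right, btmul_add_right]
      · intro x y hx hy
        rw [map_add, map_add, map_add, hx, hy]
        abel
    exact key _
  map_smul' γ d := by
    have key : ∀ z : BT Γ Λ N M, alpha D (γ • d) z = alpha D d (btmap Γ Λ N (opSmulM (M := M) γ) z) := by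
      refine bt_induction ?_ ?_ ?_
      · rw [map_zero, map_zero, map_zero]
      · intro n m
        rw [alpha_btmul, btmap_btmul, alpha_btmul]
        show _ = btmul Γ Λ N (BT Λ Γ M D) n (btmul Λ Γ M D (op γ • m) d)
        rw [btmul_rel]
      · intro x y hx hy
        rw [map_add, map_add, map_add, hx, hy]
    show alpha D (γ • d) (z0 sep) = γ • alpha D d (z0 sep)
    rw [key, rho_z0, map_smul]

/-- the bilinear datum for `κ_n : M ⊗[Γ] D → D` -/
def kappaAux (n : N) : M →ₗ[ℤ] (D →ₗ[ℤ] D) :=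
  AddMonoidHom.toIntLinearMap
    { toFun := fun m => AddMonoidHom.toIntLinearMap
        (AddMonoidHom.mk' ((sep.f (btmul Γ Λ N M n m)).1 • ·)
          (fun a b => smul_add _ a b))
      map_zero' := LinearMap.ext fun d => by
        show (sep.f (btmul Γ Λ N M n 0)).1 • d = (0 : D →ₗ[ℤ] D) d
        rw [btmul_zero_right, map_zero, Prod.fst_zero, zero_smul, LinearMap.zero_apply]
      map_add' := fun m m' => LinearMap.ext fun d => by
        show (sep.f (btmul Γ Λ N M n (m + m'))).1 • d
          = (sep.f (btmul Γ Λ N M n m)).1 • d + (sep.f (btmul Γ Λ N M n m')).1 • d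
        rw [btmul_add_right, map_add, Prod.fst_add, add_smul] }

lemma kappaAux_apply (n : N) (m : M) (d : D) :
    kappaAux sep D n m d = (sep.f (btmul Γ Λ N M n m)).1 • d := rfl

def kappa (n : N) : BT Λ Γ M D →ₗ[ℤ] D :=
  btliftInt (kappaAux sep D n) (fun γ m d => by
    rw [kappaAux_apply, kappaAux_apply, sep.f_right, Prod.smul_fst, op_smul_eq_mul,
      mul_smul])

lemma kappa_btmul (n : N) (m : M) (d : D) :
    kappa sep D n (btmul Λ Γ M D m d) = (sep.f (btmul Γ Λ N M n m)).1 • d := by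
  rw [kappa, btliftInt_btmul, kappaAux_apply]

/-- the bilinear datum for the counit map -/
def pAux : N →ₗ[Γ] (BT Λ Γ M D →ₗ[ℤ] D) where
  toFun := kappa sep D
  map_add' n n' := LinearMap.ext <| by
    refine bt_induction ?_ ?_ ?_
    · simp only [map_zero]
    · intro m d
      show kappa sep D (n + n') (btmul Λ Γ M D m d)
        = (kappa sep D n + kappa sep D n') (btmul Λ Γ M D m d)
      rw [LinearMap.add_apply, kappa_btmul, kappa_btmul, kappa_btmul, btmul_add_left,
        map_add, Prod.fst_add, add_smul]
    · intro x y hx hy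
      simp only [map_add, hx, hy]
  map_smul' γ n := LinearMap.ext <| by
    refine bt_induction ?_ ?_ ?_
    · simp only [map_zero]
    · intro m d
      show kappa sep D (γ • n) (btmul Λ Γ M D m d)
        = (γ • kappa sep D n) (btmul Λ Γ M D m d)
      rw [LinearMap.smul_apply, kappa_btmul, kappa_btmul, btmul_smul_left, map_smul,
        Prod.smul_fst, smul_eq_mul, mul_smul]
    · intro x y hx hy
      simp only [map_add, hx, hy, RingHom.id_apply]

/-- the counit map `N ⊗[Λ] (M ⊗[Γ] D) → D` -/
def pMap : BT Γ Λ N (BT Λ Γ M D) →ₗ[Γ] D :=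
  btlift (pAux sep D) (fun l n x => by
    show kappa sep D (op l • n) x = kappa sep D n (l • x)
    refine bt_induction
      (motive := fun z => kappa sep D (op l • n) z = kappa sep D n (l • z))
      ?_ ?_ ?_ x
    · simp only [smul_zero, map_zero]
    · intro m d
      rw [kappa_btmul, ← btmul_smul_left (S := Λ) (R := Γ) l m d, kappa_btmul,
        btmul_rel]
    · intro a b ha hb
      simp only [smul_add, map_add, ha, hb])

lemma pMap_btmul (n : N) (x : BT Λ Γ M D) :
    pMap sep D (btmul Γ Λ N (BT Λ Γ M D) n x) = kappa sep D n x := by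
  rw [pMap, btlift_btmul]; rfl

lemma pMap_uMap (d : D) : pMap sep D (uMap sep D d) = d := by
  have key : ∀ z : BT Γ Λ N M, pMap sep D (alpha D d z) = (sep.f z).1 • d := by
    refine bt_induction ?_ ?_ ?_
    · simp only [map_zero, Prod.fst_zero, zero_smul]
    · intro n m
      rw [alpha_btmul, pMap_btmul, kappa_btmul]
    · intro x y hx hy
      rw [map_add, map_add, hx, hy, map_add, Prod.fst_add, add_smul]
  show pMap sep D (alpha D d (z0 sep)) = d
  rw [key, z0, LinearEquiv.apply_symm_apply]
  show (1 : Γ) • d = d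
  rw [one_smul]

end SepAux
end

namespace SepAux

lemma retract_surj {R A B D E : Type} [Ring R] [AddCommGroup A] [Module R A]
    [AddCommGroup B] [Module R B] [AddCommGroup D] [Module R D]
    [AddCommGroup E] [Module R E]
    (f : A →ₗ[R] B) (u : D →ₗ[R] E) (p : E →ₗ[R] D) (hpu : ∀ x, p (u x) = x)
    (h : Function.Surjective fun g : B →ₗ[R] E => g ∘ₗ f) :
    Function.Surjective fun g : B →ₗ[R] D => g ∘ₗ f := by
  intro k
  obtain ⟨G, hG⟩ := h (u ∘ₗ k)
  dsimp only at hG ⊢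
  refine ⟨p ∘ₗ G, ?_⟩
  ext a
  have h1 := LinearMap.congr_fun hG a
  simp only [LinearMap.comp_apply] at h1 ⊢
  rw [h1, hpu]

lemma retract_exact {R A B C D E : Type} [Ring R] [AddCommGroup A] [Module R A]
    [AddCommGroup B] [Module R B] [AddCommGroup C] [Module R C]
    [AddCommGroup D] [Module R D] [AddCommGroup E] [Module R E]
    (f : A →ₗ[R] B) (g : B →ₗ[R] C) (hgf : ∀ a, g (f a) = 0)
    (u : D →ₗ[R] E) (p : E →ₗ[R] D) (hpu : ∀ x, p (u x) = x)
    (h : Function.Exact (fun t : C →ₗ[R] E => t ∘ₗ g) (fun t : B →ₗ[R] E => t ∘ₗ f)) :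
    Function.Exact (fun t : C →ₗ[R] D => t ∘ₗ g) (fun t : B →ₗ[R] D => t ∘ₗ f) := by
  intro k
  constructor
  · intro hk
    dsimp only at hk
    have h1 : (fun t : B →ₗ[R] E => t ∘ₗ f) (u ∘ₗ k) = 0 := by
      dsimp only
      ext a
      have h2 := LinearMap.congr_fun hk a
      simp only [LinearMap.comp_apply, LinearMap.zero_apply] at h2 ⊢
      rw [h2, map_zero]
    obtain ⟨H, hH⟩ := (h _).mp h1
    dsimp only at hH
    refine ⟨p ∘ₗ H, ?_⟩
    dsimp only
    ext b
    have h3 := LinearMap.congr_fun hH b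
    simp only [LinearMap.comp_apply] at h3 ⊢
    rw [h3, hpu]
  · rintro ⟨H, hH⟩
    dsimp only at hH
    subst hH
    dsimp only
    ext a
    simp only [LinearMap.comp_apply, LinearMap.zero_apply, hgf, map_zero]

end SepAux

theorem separable_equivalence_memCores_descends (Λ Γ : Type) [Ring Λ] [Ring Γ]
    (M : Type) [AddCommGroup M] [Module Λ M] [Module Γᵐᵒᵖ M] [SMulCommClass Γᵐᵒᵖ Λ M]
    (N : Type) [AddCommGroup N] [Module Γ N] [Module Λᵐᵒᵖ N] [SMulCommClass Λᵐᵒᵖ Γ N]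
    (X : Type) [AddCommGroup X] [Module Λ X] [Module Λᵐᵒᵖ X] [SMulCommClass Λᵐᵒᵖ Λ X]
    (Y : Type) [AddCommGroup Y] [Module Γ Y] [Module Γᵐᵒᵖ Y] [SMulCommClass Γᵐᵒᵖ Γ Y]
    (sep : SepEq Λ Γ M N X Y)
    (𝒞 : Set (ModuleCat.{0} Λ)) (h𝒞 : IsAdditiveSubcat Λ 𝒞)
    (hself : SelfOrthClass Λ 𝒞)
    (𝒟 : Set (ModuleCat.{0} Γ))
    (hND : tensorClass Γ Λ N 𝒞 ⊆ 𝒟)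
    (hMD : ∀ D ∈ 𝒟, ModuleCat.of Λ (BT Λ Γ M D) ∈ 𝒞)
    (L : Type) [AddCommGroup L] [Module Γ L]
    (hL : MemCores Γ (tensorClass Γ Λ N 𝒞) (ModuleCat.of Γ L)) :
    MemCores Γ 𝒟 (ModuleCat.of Γ L) := by
  obtain ⟨P, ι, d, hP, hinj, hex0, hex, hhom⟩ := hL
  refine ⟨P, ι, d, fun i => hND (hP i), hinj, hex0, hex, ?_⟩
  intro D₀ hD₀
  have hE : ModuleCat.of Γ (BT Γ Λ N (BT Λ Γ M D₀)) ∈ tensorClass Γ Λ N 𝒞 :=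
    ⟨ModuleCat.of Λ (BT Λ Γ M D₀), hMD D₀ hD₀, ⟨LinearEquiv.refl Γ _⟩⟩
  obtain ⟨hsurj, hexact0, hexact⟩ := hhom _ hE
  have hpu := SepAux.pMap_uMap sep (D₀ : Type)
  refine ⟨SepAux.retract_surj ι (SepAux.uMap sep D₀) (SepAux.pMap sep D₀) hpu hsurj,
    SepAux.retract_exact ι (d 0) (fun a => (hex0 (ι a)).mpr ⟨a, rfl⟩)
      (SepAux.uMap sep D₀) (SepAux.pMap sep D₀) hpu hexact0,
    fun i => SepAux.retract_exact (d i) (d (i + 1))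
      (fun a => (hex i (d i a)).mpr ⟨a, rfl⟩)
      (SepAux.uMap sep D₀) (SepAux.pMap sep D₀) hpu (hexact i)⟩
end

section
/- Let Λ and Γ be separably equivalent via _ΛM_Γ and _ΓN_Λ, let C be a left Λ-module, and let L be a left Γ-module. (1) If Ext^i_Γ(L, T_N(C')) = 0 for all i ≥ 1 and all C' ∈ Add C, then Ext^i_Γ(L, D) = 0 for all i ≥ 1 and all D ∈ Add(T_N(C)). (2) If C is self-orthogonal and L admits an exact sequence 0 → L → D^0 → D^1 → ⋯ with all D^i in T_N(Add C) that stays exact under Hom_Γ(-, T_N(C')) for all C' ∈ Add C, then L admits an exact sequence 0 → L → E^0 → E^1 → ⋯ with all E^i in Add(T_N(C)) that stays exact under Hom_Γ(-, E) for all E ∈ Add(T_N(C)). -/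
open TensorProduct CategoryTheory MulOpposite

noncomputable section SepAux

open Finsupp

variable (S R : Type) [Ring S] [Ring R]
    (A : Type) [AddCommGroup A] [Module S A] [Module Rᵐᵒᵖ A] [SMulCommClass Rᵐᵒᵖ S A]
    {B B' : Type} [AddCommGroup B] [Module R B] [AddCommGroup B'] [Module R B']

theorem bt_induction {motive : BT S R A B → Prop}
    (zero : motive 0) (tmul : ∀ a b, motive (btmul S R A B a b))
    (add : ∀ x y, motive x → motive y → motive (x + y)) (x : BT S R A B) : motive x := by
  obtain ⟨t, rfl⟩ := Submodule.mkQ_surjective (BTrel S R A B) x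
  induction t with
  | zero => rw [map_zero]; exact zero
  | tmul a b => exact tmul a b
  | add u v hu hv => rw [map_add]; exact add _ _ hu hv

theorem btmul_add (a : A) (b b' : B) :
    btmul S R A B a (b + b') = btmul S R A B a b + btmul S R A B a b' := by
  rw [btmul, btmul, btmul, TensorProduct.tmul_add]
  rfl

theorem btmul_zero (a : A) : btmul S R A B a 0 = 0 := by
  rw [btmul, TensorProduct.tmul_zero]
  rfl

theorem smul_btmul (s : S) (a : A) (b : B) :
    s • btmul S R A B a b = btmul S R A B (s • a) b := by
  rw [btmul, btmul, ← TensorProduct.smul_tmul']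
  rfl

theorem btmap_btmul (f : B →ₗ[R] B') (a : A) (b : B) :
    btmap S R A f (btmul S R A B a b) = btmul S R A B' a (f b) := rfl

theorem btmap_btmap {f : B →ₗ[R] B'} {g : B' →ₗ[R] B} (hfg : g ∘ₗ f = LinearMap.id)
    (x : BT S R A B) : btmap S R A g (btmap S R A f x) = x := by
  induction x using bt_induction with
  | zero => simp
  | tmul a b =>
    rw [btmap_btmul, btmap_btmul]
    congr 1
    exact congrArg (fun h => h b) (congrArg DFunLike.coe hfg)
  | add u v hu hv => rw [map_add, map_add, hu, hv]

variable (B) in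
/-- `A ⊗[R] (ι →₀ B) → ι →₀ (A ⊗[R] B)` as a `ℤ`-linear map, before passing to the
quotient. -/
def btPsi0raw (ι : Type) [DecidableEq ι] :
    (A ⊗[ℤ] (ι →₀ B)) →ₗ[ℤ] (ι →₀ BT S R A B) :=
  (Finsupp.mapRange.linearMap (((BTrel S R A B).mkQ).restrictScalars ℤ)) ∘ₗ
    (TensorProduct.finsuppRight ℤ ℤ A B ι).toLinearMap

theorem btPsi0raw_tmul (ι : Type) [DecidableEq ι] (a : A) (b : ι →₀ B) (i : ι) :
    btPsi0raw S R A B ι (a ⊗ₜ[ℤ] b) i = btmul S R A B a (b i) := by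
  exact congrArg (Submodule.Quotient.mk (p := BTrel S R A B))
    (TensorProduct.finsuppRight_apply_tmul_apply (R := ℤ) (S := ℤ) a b i)

variable (B) in
/-- The previous map, upgraded to an `S`-linear map. -/
def btPsi0 (ι : Type) [DecidableEq ι] :
    (A ⊗[ℤ] (ι →₀ B)) →ₗ[S] (ι →₀ BT S R A B) where
  toFun := btPsi0raw S R A B ι
  map_add' := (btPsi0raw S R A B ι).map_add
  map_smul' s x := by
    rw [RingHom.id_apply]
    show btPsi0raw S R A B ι (s • x) = s • btPsi0raw S R A B ι x
    induction x with
    | zero => rw [smul_zero, map_zero, smul_zero]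
    | tmul a b =>
      rw [TensorProduct.smul_tmul']
      ext i
      rw [Finsupp.smul_apply, btPsi0raw_tmul, btPsi0raw_tmul, smul_btmul]
    | add u v hu hv => rw [smul_add, map_add, map_add, smul_add, hu, hv]

theorem btPsi0_tmul (ι : Type) [DecidableEq ι] (a : A) (b : ι →₀ B) (i : ι) :
    btPsi0 S R A B ι (a ⊗ₜ[ℤ] b) i = btmul S R A B a (b i) :=
  btPsi0raw_tmul S R A ι a b i

variable (B) in
/-- `A ⊗[R] (ι →₀ B) → ι →₀ (A ⊗[R] B)`, descended to the balanced tensor product. -/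
def btPsi (ι : Type) [DecidableEq ι] :
    BT S R A (ι →₀ B) →ₗ[S] (ι →₀ BT S R A B) :=
  Submodule.liftQ _ (btPsi0 S R A B ι) <| by
    rw [BTrel, Submodule.span_le]
    rintro x ⟨r, a, b, rfl⟩
    simp only [SetLike.mem_coe, LinearMap.mem_ker, map_sub]
    rw [sub_eq_zero]
    ext i
    rw [btPsi0_tmul, btPsi0_tmul, Finsupp.smul_apply, btmul, btmul]
    refine (Submodule.Quotient.eq _).mpr ?_
    exact Submodule.subset_span ⟨r, a, b i, rfl⟩

theorem btPsi_btmul (ι : Type) [DecidableEq ι] (a : A) (b : ι →₀ B) (i : ι) :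
    btPsi S R A B ι (btmul S R A (ι →₀ B) a b) i = btmul S R A B a (b i) :=
  btPsi0_tmul S R A ι a b i

theorem btPsi_btmul_single (ι : Type) [DecidableEq ι] (a : A) (i : ι) (c : B) :
    btPsi S R A B ι (btmul S R A (ι →₀ B) a (Finsupp.single i c)) =
      Finsupp.single i (btmul S R A B a c) := by
  ext j
  rw [btPsi_btmul]
  rcases eq_or_ne i j with rfl | hij
  · rw [Finsupp.single_eq_same, Finsupp.single_eq_same]
  · rw [Finsupp.single_eq_of_ne' hij, Finsupp.single_eq_of_ne' hij, btmul_zero]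

variable (B) in
/-- `ι →₀ (A ⊗[R] B) → A ⊗[R] (ι →₀ B)` on balanced tensor products. -/
def btPhi (ι : Type) : (ι →₀ BT S R A B) →ₗ[S] BT S R A (ι →₀ B) :=
  Finsupp.lsum ℕ fun i => btmap S R A (Finsupp.lsingle i)

theorem btPhi_single (ι : Type) (i : ι) (x : BT S R A B) :
    btPhi S R A B ι (Finsupp.single i x) = btmap S R A (Finsupp.lsingle i) x := by
  rw [btPhi, Finsupp.lsum_single]

variable (B) in
/-- The balanced tensor product commutes with direct sums in the second variable. -/
def btFinsupp (ι : Type) [DecidableEq ι] :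
    BT S R A (ι →₀ B) ≃ₗ[S] (ι →₀ BT S R A B) :=
  LinearEquiv.ofLinear (btPsi S R A B ι) (btPhi S R A B ι)
    (by
      apply Finsupp.lhom_ext
      intro i x
      rw [LinearMap.comp_apply, LinearMap.id_apply, btPhi_single]
      induction x using bt_induction with
      | zero => simp
      | tmul a b =>
        rw [btmap_btmul]
        exact btPsi_btmul_single S R A ι a i b
      | add u v hu hv =>
        rw [Finsupp.single_add, map_add, map_add, hu, hv]
    )
    (by
      apply LinearMap.ext
      intro x
      rw [LinearMap.comp_apply, LinearMap.id_apply]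
      induction x using bt_induction with
      | zero => simp
      | tmul a b =>
        induction b using Finsupp.induction_linear with
        | zero => rw [btmul_zero]; simp
        | add u v hu hv => rw [btmul_add, map_add, map_add, hu, hv]
        | single i c =>
          rw [btPsi_btmul_single, btPhi_single, btmap_btmul, Finsupp.lsingle_apply]
      | add u v hu hv => rw [map_add, map_add, hu, hv]
    )

end SepAux

section ExtAux

/-- Subsingleton-ness of the value of a functor on a retract. -/
theorem subsingleton_obj_of_retract {R : Type} [Ring R]
    (G : ModuleCat.{0} R ⥤ ModuleCat.{0} ℤ) {A B : ModuleCat.{0} R}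
    (s : A →ₗ[R] B) (r : B →ₗ[R] A) (hr : r ∘ₗ s = LinearMap.id)
    (h : Subsingleton (G.obj B)) : Subsingleton (G.obj A) := by
  constructor
  intro x y
  have e : (ModuleCat.ofHom s : A ⟶ B) ≫ (ModuleCat.ofHom r : B ⟶ A) = 𝟙 A := by
    rw [← ModuleCat.ofHom_comp, hr]; rfl
  have e2 : G.map ((ModuleCat.ofHom s : A ⟶ B) ≫ (ModuleCat.ofHom r : B ⟶ A)) = G.map (𝟙 A) := congrArg G.map e
  rw [G.map_comp, G.map_id] at e2
  have key : ∀ z : G.obj A, (G.map (ModuleCat.ofHom r : B ⟶ A)) ((G.map (ModuleCat.ofHom s : A ⟶ B)) z) = z := by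
    intro z
    exact congrArg (fun f => f z) e2
  rw [← key x, ← key y]
  congr 1
  exact Subsingleton.elim _ _

/-- Retract lemma for `Hom(-, E)`-exactness. -/
theorem exact_hom_retract {R A B Cc E F : Type} [Ring R]
    [AddCommGroup A] [Module R A] [AddCommGroup B] [Module R B]
    [AddCommGroup Cc] [Module R Cc] [AddCommGroup E] [Module R E]
    [AddCommGroup F] [Module R F]
    (u : A →ₗ[R] B) (v : B →ₗ[R] Cc) (huv : v ∘ₗ u = 0)
    (s : E →ₗ[R] F) (r : F →ₗ[R] E) (hr : r ∘ₗ s = LinearMap.id)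
    (hF : Function.Exact (fun g : Cc →ₗ[R] F => g ∘ₗ v) (fun g : B →ₗ[R] F => g ∘ₗ u)) :
    Function.Exact (fun g : Cc →ₗ[R] E => g ∘ₗ v) (fun g : B →ₗ[R] E => g ∘ₗ u) := by
  intro g
  constructor
  · intro hg
    have hg' : g ∘ₗ u = 0 := hg
    obtain ⟨h, hh⟩ := (hF (s ∘ₗ g)).1 (by
      show (s ∘ₗ g) ∘ₗ u = 0
      rw [LinearMap.comp_assoc, hg', LinearMap.comp_zero])
    have hh' : h ∘ₗ v = s ∘ₗ g := hh
    refine ⟨r ∘ₗ h, ?_⟩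
    show (r ∘ₗ h) ∘ₗ v = g
    rw [LinearMap.comp_assoc, hh', ← LinearMap.comp_assoc, hr, LinearMap.id_comp]
  · rintro ⟨h, rfl⟩
    show (h ∘ₗ v) ∘ₗ u = 0
    rw [LinearMap.comp_assoc, huv, LinearMap.comp_zero]

end ExtAux

theorem separable_equivalence_Add_lemma (Λ Γ : Type) [Ring Λ] [Ring Γ]
    (M : Type) [AddCommGroup M] [Module Λ M] [Module Γᵐᵒᵖ M] [SMulCommClass Γᵐᵒᵖ Λ M]
    (N : Type) [AddCommGroup N] [Module Γ N] [Module Λᵐᵒᵖ N] [SMulCommClass Λᵐᵒᵖ Γ N]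
    (X : Type) [AddCommGroup X] [Module Λ X] [Module Λᵐᵒᵖ X] [SMulCommClass Λᵐᵒᵖ Λ X]
    (Y : Type) [AddCommGroup Y] [Module Γ Y] [Module Γᵐᵒᵖ Y] [SMulCommClass Γᵐᵒᵖ Γ Y]
    (sep : SepEq Λ Γ M N X Y)
    (C : Type) [AddCommGroup C] [Module Λ C]
    (L : Type) [AddCommGroup L] [Module Γ L] :
    (ModuleCat.of Γ L ∈ leftPerp Γ (tensorClass Γ Λ N (AddClass Λ C)) →
      ModuleCat.of Γ L ∈ leftPerp Γ (AddClass Γ (BT Γ Λ N C))) ∧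
    (SelfOrthClass Λ (AddClass Λ C) →
      MemCores Γ (tensorClass Γ Λ N (AddClass Λ C)) (ModuleCat.of Γ L) →
        MemCores Γ (AddClass Γ (BT Γ Λ N C)) (ModuleCat.of Γ L)) := by
  have key1 : ∀ D ∈ tensorClass Γ Λ N (AddClass Λ C), D ∈ AddClass Γ (BT Γ Λ N C) := by
    rintro D ⟨C', ⟨ι, s, r, hr⟩, ⟨g⟩⟩
    haveI := Classical.decEq ι
    refine ⟨ι, (btFinsupp Γ Λ N C ι).toLinearMap ∘ₗ btmap Γ Λ N s ∘ₗ g.toLinearMap,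
      g.symm.toLinearMap ∘ₗ btmap Γ Λ N r ∘ₗ (btFinsupp Γ Λ N C ι).symm.toLinearMap, ?_⟩
    apply LinearMap.ext
    intro x
    simp only [LinearMap.comp_apply, LinearEquiv.coe_coe, LinearMap.id_apply,
      LinearEquiv.symm_apply_apply]
    rw [btmap_btmap Γ Λ N hr, LinearEquiv.symm_apply_apply]
  have key2 : ∀ κ : Type, ModuleCat.of Γ (κ →₀ BT Γ Λ N C) ∈
      tensorClass Γ Λ N (AddClass Λ C) := by
    intro κ
    haveI := Classical.decEq κ
    exact ⟨ModuleCat.of Λ (κ →₀ C), ⟨κ, LinearMap.id, LinearMap.id, LinearMap.id_comp _⟩,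
      ⟨(btFinsupp Γ Λ N C κ).symm⟩⟩
  constructor
  · intro h D hD i hi
    obtain ⟨ι, s, r, hr⟩ := hD
    have hF := h (ModuleCat.of Γ (ι →₀ BT Γ Λ N C)) (key2 ι) i hi
    exact subsingleton_obj_of_retract
      ((Ext ℤ (ModuleCat Γ) i).obj (Opposite.op (ModuleCat.of Γ L))) s r hr hF
  · intro _ hmem
    obtain ⟨P, ι0, d, hP, hinj, hex0, hex, hhom⟩ := hmem
    refine ⟨P, ι0, d, fun i => key1 _ (hP i), hinj, hex0, hex, ?_⟩
    intro E hE
    obtain ⟨κ, s, r, hr⟩ := hE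
    obtain ⟨hs, he0, hei⟩ := hhom (ModuleCat.of Γ (κ →₀ BT Γ Λ N C)) (key2 κ)
    refine ⟨?_, ?_, ?_⟩
    · intro f
      obtain ⟨h0, hh0⟩ := hs (s ∘ₗ f)
      have hh0' : h0 ∘ₗ ι0 = s ∘ₗ f := hh0
      refine ⟨r ∘ₗ h0, ?_⟩
      show (r ∘ₗ h0) ∘ₗ ι0 = f
      rw [LinearMap.comp_assoc, hh0', ← LinearMap.comp_assoc, hr, LinearMap.id_comp]
    · have h0 : d 0 ∘ₗ ι0 = 0 := LinearMap.ext fun x => (hex0 (ι0 x)).2 ⟨x, rfl⟩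
      exact exact_hom_retract ι0 (d 0) h0 s r hr he0
    · intro i
      have h0 : d (i+1) ∘ₗ d i = 0 := LinearMap.ext fun x => (hex i (d i x)).2 ⟨x, rfl⟩
      exact exact_hom_retract (d i) (d (i+1)) h0 s r hr (hei i)
end
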